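/- arXiv:2307.12281 — 7 statements merged into one kernel-verified Lean document; each statement's English description precedes it below -/
import Mathlib

section
/- For all real r > 0, we have r + √r·sin √r + 4·cos √r - 4 > 0. -/
open Real

lemma nonneg_of_deriv_aux (F : ℝ → ℝ) (hd : Differentiable ℝ F) (h0 : F 0 = 0)
    (h : ∀ x, 0 ≤ x → 0 ≤ deriv F x) : ∀ x, 0 ≤ x → 0 ≤ F x := by
  intro x hx
  have hmono : MonotoneOn F (Set.Ici (0:ℝ)) := by
    apply monotoneOn_of_deriv_nonneg (convex_Ici 0) hd.continuous.continuousOn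
      (fun y _ => (hd y).differentiableWithinAt)
    intro y hy
    rw [interior_Ici] at hy
    exact h y hy.le
  have := hmono (Set.self_mem_Ici) (Set.mem_Ici.2 hx) hx
  linarith [h0 ▸ this]

lemma sin_ge_cubic (x : ℝ) (hx : 0 ≤ x) : x - x^3/6 ≤ Real.sin x := by
  have key := nonneg_of_deriv_aux (fun x => Real.sin x - (x - x^3/6))
    (by fun_prop) (by simp)
    (fun y hy => by
      have hD : HasDerivAt (fun x => Real.sin x - (x - x^3/6))
          (Real.cos y - (1 - 3*y^2/6)) y := by
        have := (Real.hasDerivAt_sin y).sub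
          ((hasDerivAt_id y).sub (((hasDerivAt_pow 3 y).div_const 6)))
        simpa [Pi.sub_def, Pi.add_def] using this
      rw [hD.deriv]
      nlinarith [Real.one_sub_sq_div_two_le_cos (x := y)])
  linarith [key x hx]

lemma cos_le_quartic (x : ℝ) (hx : 0 ≤ x) : Real.cos x ≤ 1 - x^2/2 + x^4/24 := by
  have key := nonneg_of_deriv_aux (fun x => 1 - x^2/2 + x^4/24 - Real.cos x)
    (by fun_prop) (by simp)
    (fun y hy => by
      have hD : HasDerivAt (fun x => 1 - x^2/2 + x^4/24 - Real.cos x)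
          (0 - 2*y/2 + 4*y^3/24 - (-Real.sin y)) y := by
        have := (((hasDerivAt_const y (1:ℝ)).sub ((hasDerivAt_pow 2 y).div_const 2)).add
          ((hasDerivAt_pow 4 y).div_const 24)).sub (Real.hasDerivAt_cos y)
        simpa [Pi.sub_def, Pi.add_def] using this
      rw [hD.deriv]
      nlinarith [sin_ge_cubic y hy])
  linarith [key x hx]

lemma sin_le_quintic (x : ℝ) (hx : 0 ≤ x) : Real.sin x ≤ x - x^3/6 + x^5/120 := by
  have key := nonneg_of_deriv_aux (fun x => x - x^3/6 + x^5/120 - Real.sin x)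
    (by fun_prop) (by simp)
    (fun y hy => by
      have hD : HasDerivAt (fun x => x - x^3/6 + x^5/120 - Real.sin x)
          (1 - 3*y^2/6 + 5*y^4/120 - Real.cos y) y := by
        have := (((hasDerivAt_id y).sub ((hasDerivAt_pow 3 y).div_const 6)).add
          ((hasDerivAt_pow 5 y).div_const 120)).sub (Real.hasDerivAt_sin y)
        simpa [Pi.sub_def, Pi.add_def] using this
      rw [hD.deriv]
      nlinarith [cos_le_quartic y hy])
  linarith [key x hx]

lemma cos_ge_sextic (x : ℝ) (hx : 0 ≤ x) : 1 - x^2/2 + x^4/24 - x^6/720 ≤ Real.cos x := by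
  have key := nonneg_of_deriv_aux (fun x => Real.cos x - (1 - x^2/2 + x^4/24 - x^6/720))
    (by fun_prop) (by simp)
    (fun y hy => by
      have hD : HasDerivAt (fun x => Real.cos x - (1 - x^2/2 + x^4/24 - x^6/720))
          (-Real.sin y - (0 - 2*y/2 + 4*y^3/24 - 6*y^5/720)) y := by
        have := (Real.hasDerivAt_cos y).sub
          ((((hasDerivAt_const y (1:ℝ)).sub ((hasDerivAt_pow 2 y).div_const 2)).add
          ((hasDerivAt_pow 4 y).div_const 24)).sub ((hasDerivAt_pow 6 y).div_const 720))
        simpa [Pi.sub_def, Pi.add_def] using this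
      rw [hD.deriv]
      nlinarith [sin_le_quintic y hy])
  linarith [key x hx]

lemma sin_ge_septic (x : ℝ) (hx : 0 ≤ x) :
    x - x^3/6 + x^5/120 - x^7/5040 ≤ Real.sin x := by
  have key := nonneg_of_deriv_aux (fun x => Real.sin x - (x - x^3/6 + x^5/120 - x^7/5040))
    (by fun_prop) (by simp)
    (fun y hy => by
      have hD : HasDerivAt (fun x => Real.sin x - (x - x^3/6 + x^5/120 - x^7/5040))
          (Real.cos y - (1 - 3*y^2/6 + 5*y^4/120 - 7*y^6/5040)) y := by
        have := (Real.hasDerivAt_sin y).sub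
          ((((hasDerivAt_id y).sub ((hasDerivAt_pow 3 y).div_const 6)).add
          ((hasDerivAt_pow 5 y).div_const 120)).sub ((hasDerivAt_pow 7 y).div_const 5040))
        simpa [Pi.sub_def, Pi.add_def] using this
      rw [hD.deriv]
      nlinarith [cos_ge_sextic y hy])
  linarith [key x hx]

theorem stmt_4 (r : ℝ) (hr : 0 < r) :
    r + Real.sqrt r * Real.sin (Real.sqrt r) + 4 * Real.cos (Real.sqrt r) - 4 > 0 := by
  set s := Real.sqrt r with hs
  have hs0 : 0 < s := Real.sqrt_pos.2 hr
  have hsq : s^2 = r := Real.sq_sqrt hr.le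
  rw [← hsq]
  rcases le_or_gt (s^2) 13 with h13 | h13
  · -- small case: sharp Taylor bounds
    have h1 := sin_ge_septic s hs0.le
    have h2 := cos_ge_sextic s hs0.le
    nlinarith [pow_pos hs0 6, pow_pos hs0 2, mul_pos hs0 (pow_pos hs0 5),
      sq_nonneg s, mul_le_mul_of_nonneg_left h13 (pow_pos hs0 6).le]
  · -- large case: crude bounds
    have h1 := Real.neg_one_le_sin s
    have h2 := Real.neg_one_le_cos s
    have hs36 : (3.6:ℝ) ≤ s := by nlinarith
    nlinarith [mul_le_mul_of_nonneg_left h1 hs0.le]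
end

section
/- Let N ≥ 2 be an integer and let d₁, d₂, d₃ be real numbers. The N×N symmetric matrix Θ with Θ₁₁ = 1 + d₁ + 2d₂ + d₃, Θ₁ⱼ = Θⱼ₁ = d₁ + d₂ for j ≥ 2, Θᵢᵢ = 1 + d₁ for i ≥ 2, and Θᵢⱼ = d₁ for distinct i, j ≥ 2 is positive definite if and only if d₁ > -1/(N-1) and 1 + d₃ + (d₁ + 2d₂ - (N-1)d₂²)/(1 + (N-1)d₁) > 0. -/
open Finset Matrix

lemma quad_aux (N : ℕ) [NeZero N] (d₁ d₂ d₃ : ℝ) (x : Fin N → ℝ) :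
    dotProduct x ((Matrix.of fun (i j : Fin N) =>
      if (i : ℕ) = 0 then
        (if (j : ℕ) = 0 then 1 + d₁ + 2 * d₂ + d₃ else d₁ + d₂)
      else if (j : ℕ) = 0 then d₁ + d₂
      else if i = j then 1 + d₁ else d₁) *ᵥ x) =
      (1 + d₁ + 2 * d₂ + d₃) * (x 0)^2
        + 2 * (d₁ + d₂) * (x 0) * (∑ i ∈ univ.erase 0, x i)
        + d₁ * (∑ i ∈ univ.erase 0, x i)^2 + ∑ i ∈ univ.erase 0, (x i)^2 := by
  have hsplit : ∀ g : Fin N → ℝ, ∑ i, g i = g 0 + ∑ i ∈ univ.erase 0, g i :=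
    fun g => (Finset.add_sum_erase _ g (mem_univ 0)).symm
  have hv : ∀ i : Fin N, ((i:ℕ) = 0) ↔ i = 0 := fun i => by rw [Fin.ext_iff, Fin.val_zero]
  simp only [dotProduct, Matrix.mulVec, Matrix.of_apply, hv]
  set E := (univ : Finset (Fin N)).erase 0 with hE
  set s := ∑ i ∈ E, x i with hs
  have row : ∀ A B : ℝ, ∑ j : Fin N, (if j = 0 then A else B) * x j = A * x 0 + B * s := by
    intro A B
    rw [hsplit]
    congr 1
    rw [Finset.mul_sum]
    exact Finset.sum_congr rfl fun j hj => by rw [if_neg (Finset.ne_of_mem_erase hj)]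
  have rowi : ∀ i ∈ E, ∑ j : Fin N, (if j = 0 then d₁+d₂ else if i = j then 1+d₁ else d₁) * x j
      = (d₁ + d₂) * x 0 + (d₁ * s + x i) := by
    intro i hi
    rw [hsplit]
    congr 1
    have h1 : ∀ j ∈ E, (if j = 0 then d₁+d₂ else if i = j then 1+d₁ else d₁) * x j
          = d₁ * x j + (if i = j then x j else 0) := fun j hj => by
      rw [if_neg (Finset.ne_of_mem_erase hj)]; split_ifs <;> ring
    rw [Finset.sum_congr rfl h1, Finset.sum_add_distrib, Finset.sum_ite_eq E i x,
        if_pos hi, ← Finset.mul_sum]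
  rw [hsplit]
  simp only [show ((0:Fin N) = 0) = True from by simp, if_true]
  rw [row]
  have eE : ∀ i ∈ E, (x i * ∑ j : Fin N, (if i = 0 then
        (if j = 0 then 1 + d₁ + 2 * d₂ + d₃ else d₁ + d₂)
      else if j = 0 then d₁ + d₂
      else if i = j then 1 + d₁ else d₁) * x j)
      = ((d₁ + d₂) * x 0 + d₁ * s) * x i + (x i)^2 := by
    intro i hi
    have e1 : ∀ j : Fin N, (if i = 0 then
        (if j = 0 then 1 + d₁ + 2 * d₂ + d₃ else d₁ + d₂)
      else if j = 0 then d₁ + d₂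
      else if i = j then 1 + d₁ else d₁) * x j
        = (if j = 0 then d₁+d₂ else if i = j then 1+d₁ else d₁) * x j :=
      fun j => by rw [if_neg (Finset.ne_of_mem_erase hi)]
    simp only [e1]
    rw [rowi i hi]; ring
  rw [Finset.sum_congr rfl eE, Finset.sum_add_distrib, ← Finset.mul_sum]
  ring

theorem stmt_6 (N : ℕ) (hN : 2 ≤ N) (d₁ d₂ d₃ : ℝ)
    (Θ : Matrix (Fin N) (Fin N) ℝ)
    (hΘ : Θ = Matrix.of fun (i j : Fin N) =>
      if (i : ℕ) = 0 then
        (if (j : ℕ) = 0 then 1 + d₁ + 2 * d₂ + d₃ else d₁ + d₂)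
      else if (j : ℕ) = 0 then d₁ + d₂
      else if i = j then 1 + d₁ else d₁) :
    Θ.PosDef ↔ (d₁ > -(1 / (N - 1 : ℝ)) ∧
      1 + d₃ + (d₁ + 2 * d₂ - (N - 1 : ℝ) * d₂ ^ 2) / (1 + (N - 1 : ℝ) * d₁) > 0) := by
  haveI : NeZero N := ⟨by omega⟩
  set M : ℝ := (N : ℝ) - 1 with hMdef
  have hM : 0 < M := by
    have : (2:ℝ) ≤ (N:ℝ) := by exact_mod_cast hN
    simp only [hMdef]; linarith
  have hMinv : M * (1/M) = 1 := by field_simp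
  set E := (univ : Finset (Fin N)).erase 0 with hE
  have hcard : (E.card : ℝ) = M := by
    rw [hE, Finset.card_erase_of_mem (mem_univ 0), Finset.card_univ, Fintype.card_fin]
    have : 1 ≤ N := by omega
    push_cast [this]
    ring
  set a := 1 + d₁ + 2 * d₂ + d₃ with ha
  set b := d₁ + d₂ with hb
  have key : ∀ x : Fin N → ℝ, dotProduct x (Θ *ᵥ x) =
      a * (x 0)^2 + 2 * b * (x 0) * (∑ i ∈ E, x i) + d₁ * (∑ i ∈ E, x i)^2
        + ∑ i ∈ E, (x i)^2 := by
    intro x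
    rw [hΘ]
    exact quad_aux N d₁ d₂ d₃ x
  have hstar : ∀ x : Fin N → ℝ, star x = x := fun x => by
    funext i; simp
  -- the second Fin element
  have h1N : (1 : ℕ) < N := by omega
  set o : Fin N := ⟨1, h1N⟩ with ho
  have hoE : o ∈ E := by
    rw [hE]
    refine Finset.mem_erase.mpr ⟨?_, mem_univ o⟩
    intro h
    have := congrArg Fin.val h
    simp [ho] at this
  rw [Matrix.posDef_iff_dotProduct_mulVec]
  constructor
  · rintro ⟨hherm, hpos⟩
    -- first condition
    have t1 : (0:ℝ) < d₁ * M^2 + M := by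
      have hx : (fun i : Fin N => if i = 0 then (0:ℝ) else 1) ≠ 0 := by
        intro h
        have := congrFun h o
        simp [Finset.ne_of_mem_erase hoE] at this
      have := hpos hx
      rw [hstar, key] at this
      have hs1 : ∑ i ∈ E, (if i = (0:Fin N) then (0:ℝ) else 1) = M := by
        rw [Finset.sum_congr rfl (fun i hi => if_neg (Finset.ne_of_mem_erase hi)),
          Finset.sum_const, nsmul_eq_mul, mul_one, hcard]
      have hq1 : ∑ i ∈ E, (if i = (0:Fin N) then (0:ℝ) else 1)^2 = M := by
        rw [Finset.sum_congr rfl (fun i hi => by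
          rw [if_neg (Finset.ne_of_mem_erase hi), one_pow]),
          Finset.sum_const, nsmul_eq_mul, mul_one, hcard]
      rw [hs1, hq1] at this
      simp at this
      linarith [this]
    have hc : 0 < 1 + M * d₁ := by nlinarith [t1, hM]
    have cond1 : d₁ > -(1 / M) := by
      nlinarith [mul_pos (one_div_pos.mpr hM) hc, hMinv]
    refine ⟨cond1, ?_⟩
    -- second condition
    set u : ℝ := -b / (1 + M * d₁) with hu
    have hx : (fun i : Fin N => if i = 0 then (1:ℝ) else u) ≠ 0 := by
      intro h
      have := congrFun h 0
      simp at this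
    have h2 := hpos hx
    rw [hstar, key] at h2
    have hs1 : ∑ i ∈ E, (if i = (0:Fin N) then (1:ℝ) else u) = M * u := by
      rw [Finset.sum_congr rfl (fun i hi => if_neg (Finset.ne_of_mem_erase hi)),
        Finset.sum_const, nsmul_eq_mul, hcard]
    have hq1 : ∑ i ∈ E, (if i = (0:Fin N) then (1:ℝ) else u)^2 = M * u^2 := by
      rw [Finset.sum_congr rfl (fun i hi => by rw [if_neg (Finset.ne_of_mem_erase hi)]),
        Finset.sum_const, nsmul_eq_mul, hcard]
    rw [hs1, hq1] at h2
    simp only [show ((0:Fin N) = 0) = True from by simp, if_true] at h2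
    have hval : a * (1:ℝ)^2 + 2 * b * 1 * (M * u) + d₁ * (M * u)^2 + M * u^2
        = 1 + d₃ + (d₁ + 2 * d₂ - M * d₂ ^ 2) / (1 + M * d₁) := by
      rw [hu, ha, hb]
      field_simp [show (1 + d₁ * M) ≠ 0 by rw [mul_comm]; exact hc.ne']
      ring
    rw [hval] at h2
    exact h2
  · rintro ⟨cond1, cond2⟩
    have hc : 0 < 1 + M * d₁ := by
      nlinarith [mul_pos hM (show 0 < d₁ + 1/M by nlinarith [hMinv]), hMinv]
    constructor
    · -- Hermitian
      rw [hΘ]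
      ext i j
      simp only [conjTranspose_apply, Matrix.of_apply, star_trivial]
      by_cases hi : (i:ℕ) = 0 <;> by_cases hj : (j:ℕ) = 0 <;>
        simp [hi, hj]
      by_cases hij : i = j
      · simp [hij]
      · rw [if_neg hij, if_neg (fun h => hij h.symm)]
    · intro x hx
      rw [hstar, key]
      set t := x 0 with ht
      set s := ∑ i ∈ E, x i with hs
      set q := ∑ i ∈ E, (x i)^2 with hq
      have hCS : s^2 ≤ M * q := by
        have := sq_sum_le_card_mul_sum_sq (s := E) (f := x)
        rw [hcard] at this
        exact this
      have hqnn : 0 ≤ q := Finset.sum_nonneg fun i _ => sq_nonneg _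
      set S : ℝ := 1 + d₃ + (d₁ + 2 * d₂ - M * d₂ ^ 2) / (1 + M * d₁) with hS
      have hid : a * t^2 + 2 * b * t * s + d₁ * s^2 + q
          = (1 + M * d₁)/M * (s + b * M / (1 + M * d₁) * t)^2 + S * t^2 + (q - s^2/M) := by
        rw [hS, ha, hb]
        field_simp [show (1 + d₁ * M) ≠ 0 by rw [mul_comm]; exact hc.ne']
        ring
      rw [hid]
      have h3 : 0 ≤ q - s^2/M := by
        rw [sub_nonneg, div_le_iff₀ hM]
        nlinarith [hCS]
      by_cases htz : t = 0
      · by_cases hsz : s = 0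
        · -- some coordinate in E is nonzero
          have : ∃ i, x i ≠ 0 := by
            by_contra h
            push_neg at h
            exact hx (funext h)
          obtain ⟨i, hi⟩ := this
          have hiE : i ∈ E := by
            rw [hE]
            refine Finset.mem_erase.mpr ⟨?_, mem_univ i⟩
            intro h; rw [h] at hi; exact hi (ht ▸ htz)
          have hqpos : 0 < q := by
            have h4 : (x i)^2 ≤ q := Finset.single_le_sum (fun j _ => sq_nonneg (x j)) hiE
            have h5 : 0 < (x i)^2 := pow_two_pos_of_ne_zero hi
            linarith
          have e : (1 + M * d₁)/M * (s + b * M / (1 + M * d₁) * t)^2 + S * t^2 + (q - s^2/M)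
              = q := by rw [htz, hsz]; ring
          rw [e]
          exact hqpos
        · have hs2 : 0 < s^2 := pow_two_pos_of_ne_zero hsz
          have h5 : 0 < (1 + M * d₁)/M * s^2 := mul_pos (div_pos hc hM) hs2
          have e : (1 + M * d₁)/M * (s + b * M / (1 + M * d₁) * t)^2 + S * t^2 + (q - s^2/M)
              = (1 + M * d₁)/M * s^2 + (q - s^2/M) := by rw [htz]; ring
          rw [e]
          linarith
      · have h1 : 0 ≤ (1 + M * d₁)/M * (s + b * M / (1 + M * d₁) * t)^2 :=
          mul_nonneg (le_of_lt (div_pos hc hM)) (sq_nonneg _)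
        have h2 : 0 < S * t^2 := mul_pos cond2 (pow_two_pos_of_ne_zero htz)
        rw [add_assoc]
        exact add_pos_of_nonneg_of_pos h1 (add_pos_of_pos_of_nonneg h2 h3)
end

section
/- Let ν be a measure on (0,∞) with ∫ t² ν(dt) < ∞, and A ≥ 0, and let D(r) = ∫_{(0,∞)} (1 - e^{-rt}) ν(dt) + A·r. Then for all r > 0: D''(0)·(D'(r) - D'(0)) ≤ D'(0)·(D''(r) - D''(0)). -/
open MeasureTheory Real

lemma aux_sigmaFinite (μ : Measure ℝ) (hμ : μ (Set.Iic 0) = 0)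
    (h : Integrable (fun t => t ^ 2) μ) : SigmaFinite μ := by
  refine ⟨⟨⟨fun n => Set.Iic 0 ∪ {x : ℝ | (1 / (n + 1) : ℝ) ≤ x}, fun _ => trivial, ?_, ?_⟩⟩⟩
  · intro n
    have hpos : (0 : ℝ) < 1 / (n + 1) := by positivity
    have hsub : {x : ℝ | (1 / (n + 1) : ℝ) ≤ x} ⊆ {x : ℝ | (1 / (n + 1) : ℝ) ^ 2 ≤ x ^ 2} := by
      intro x hx
      exact pow_le_pow_left₀ hpos.le hx 2
    calc μ (Set.Iic 0 ∪ {x : ℝ | (1 / (n + 1) : ℝ) ≤ x})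
        ≤ μ (Set.Iic 0) + μ {x : ℝ | (1 / (n + 1) : ℝ) ≤ x} := measure_union_le _ _
      _ = μ {x : ℝ | (1 / (n + 1) : ℝ) ≤ x} := by rw [hμ, zero_add]
      _ ≤ μ {x : ℝ | (1 / (n + 1) : ℝ) ^ 2 ≤ x ^ 2} := measure_mono hsub
      _ < ⊤ := h.measure_ge_lt_top (by positivity)
  · ext x
    simp only [Set.mem_iUnion, Set.mem_union, Set.mem_Iic, Set.mem_setOf_eq, Set.mem_univ,
      iff_true]
    rcases le_or_gt x 0 with hx | hx
    · exact ⟨0, Or.inl hx⟩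
    · obtain ⟨n, hn⟩ := exists_nat_one_div_lt hx
      exact ⟨n, Or.inr hn.le⟩

theorem stmt_9 (ν : Measure ℝ) (A : ℝ) (hA : 0 ≤ A)
    (hν2 : Integrable (fun t => t ^ 2) (ν.restrict (Set.Ioi 0)))
    (D D' D'' : ℝ → ℝ)
    (hD : ∀ r : ℝ, D r = (∫ t in Set.Ioi (0 : ℝ), (1 - exp (-r * t)) ∂ν) + A * r)
    (hD' : ∀ r : ℝ, D' r = A + ∫ t in Set.Ioi (0 : ℝ), t * exp (-r * t) ∂ν)
    (hD'' : ∀ r : ℝ, D'' r = -∫ t in Set.Ioi (0 : ℝ), t ^ 2 * exp (-r * t) ∂ν)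
    (r : ℝ) (hr : 0 < r) :
    D'' 0 * (D' r - D' 0) ≤ D' 0 * (D'' r - D'' 0) := by
  set μ := ν.restrict (Set.Ioi 0) with hμdef
  have haes : ∀ᵐ t ∂μ, t ∈ Set.Ioi (0 : ℝ) := ae_restrict_mem measurableSet_Ioi
  have hce : Continuous fun t : ℝ => exp (-r * t) :=
    Real.continuous_exp.comp (continuous_const.mul continuous_id)
  have hc1 : Continuous fun t : ℝ => t * exp (-r * t) := continuous_id.mul hce
  have hc2 : Continuous fun t : ℝ => t ^ 2 * exp (-r * t) := (continuous_pow 2).mul hce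
  have hd_int : Integrable (fun t : ℝ => t ^ 2 * exp (-r * t)) μ := by
    refine hν2.mono hc2.aestronglyMeasurable ?_
    filter_upwards [haes] with t ht
    have h1 : exp (-r * t) ≤ 1 := exp_le_one_iff.2 (by nlinarith [ht.out])
    simp only [Real.norm_eq_abs, abs_mul, Real.abs_exp, abs_pow, sq_abs]
    nlinarith [sq_nonneg t, exp_pos (-r * t)]
  have hdc : ∫ t, t ^ 2 * exp (-r * t) ∂μ ≤ ∫ t, t ^ 2 ∂μ := by
    refine integral_mono_ae hd_int hν2 ?_
    filter_upwards [haes] with t ht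
    have h1 : exp (-r * t) ≤ 1 := exp_le_one_iff.2 (by nlinarith [ht.out])
    nlinarith [sq_nonneg t, exp_pos (-r * t)]
  rw [hD' r, hD' 0, hD'' r, hD'' 0]
  simp only [neg_zero, zero_mul, exp_zero, mul_one]
  set a := ∫ t in Set.Ioi (0:ℝ), t ∂ν with ha
  set b := ∫ t in Set.Ioi (0:ℝ), t * exp (-r * t) ∂ν with hb
  set c := ∫ t in Set.Ioi (0:ℝ), t ^ 2 ∂ν with hc
  set d := ∫ t in Set.Ioi (0:ℝ), t ^ 2 * exp (-r * t) ∂ν with hd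
  by_cases hta : Integrable (fun t : ℝ => t) μ
  · -- main case
    have hb_int : Integrable (fun t : ℝ => t * exp (-r * t)) μ := by
      refine hta.mono hc1.aestronglyMeasurable ?_
      filter_upwards [haes] with t ht
      have h1 : exp (-r * t) ≤ 1 := exp_le_one_iff.2 (by nlinarith [ht.out])
      simp only [Real.norm_eq_abs, abs_mul, Real.abs_exp]
      nlinarith [abs_nonneg t, exp_pos (-r * t)]
    haveI : SigmaFinite μ := by
      refine aux_sigmaFinite μ ?_ hν2
      rw [hμdef, Measure.restrict_apply measurableSet_Iic]
      rw [Set.Iic_inter_Ioi, Set.Ioc_self, measure_empty]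
    have hF_nonpos : ∫ z : ℝ × ℝ,
        z.1 * z.2 * (z.2 - z.1) * (exp (-r * z.2) - exp (-r * z.1)) ∂(μ.prod μ) ≤ 0 := by
      refine integral_nonpos_of_ae ?_
      have hprod : ∀ᵐ z : ℝ × ℝ ∂(μ.prod μ),
          z.1 ∈ Set.Ioi (0:ℝ) ∧ z.2 ∈ Set.Ioi (0:ℝ) := by
        refine (MeasureTheory.Measure.ae_prod_iff_ae_ae ?_).2 ?_
        · exact (measurable_fst measurableSet_Ioi).inter (measurable_snd measurableSet_Ioi)
        filter_upwards [haes] with s hs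
        filter_upwards [haes] with t ht
        exact ⟨hs, ht⟩
      filter_upwards [hprod] with z hz
      simp only [Pi.zero_apply]
      obtain ⟨hs, ht⟩ := hz
      have hs : (0:ℝ) < z.1 := hs
      have ht : (0:ℝ) < z.2 := ht
      rcases le_total z.1 z.2 with h | h
      · have he : exp (-r * z.2) ≤ exp (-r * z.1) := exp_le_exp.2 (by nlinarith)
        have h1 : (0:ℝ) ≤ z.1 * z.2 * (z.2 - z.1) :=
          mul_nonneg (mul_nonneg hs.le ht.le) (sub_nonneg.2 h)
        nlinarith [mul_nonneg h1 (sub_nonneg.2 he)]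
      · have he : exp (-r * z.1) ≤ exp (-r * z.2) := exp_le_exp.2 (by nlinarith)
        have h1 : (0:ℝ) ≤ z.1 * z.2 * (z.1 - z.2) :=
          mul_nonneg (mul_nonneg hs.le ht.le) (sub_nonneg.2 h)
        nlinarith [mul_nonneg h1 (sub_nonneg.2 he)]
    have hexpand : ∫ z : ℝ × ℝ,
        z.1 * z.2 * (z.2 - z.1) * (exp (-r * z.2) - exp (-r * z.1)) ∂(μ.prod μ)
        = a * d - c * b - b * c + d * a := by
      have hI1 : Integrable (fun z : ℝ × ℝ => z.1 * (z.2 ^ 2 * exp (-r * z.2))) (μ.prod μ) :=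
        hta.mul_prod hd_int
      have hI2 : Integrable (fun z : ℝ × ℝ => z.1 ^ 2 * (z.2 * exp (-r * z.2))) (μ.prod μ) :=
        hν2.mul_prod hb_int
      have hI3 : Integrable (fun z : ℝ × ℝ => (z.1 * exp (-r * z.1)) * z.2 ^ 2) (μ.prod μ) :=
        hb_int.mul_prod hν2
      have hI4 : Integrable (fun z : ℝ × ℝ => (z.1 ^ 2 * exp (-r * z.1)) * z.2) (μ.prod μ) :=
        hd_int.mul_prod hta
      have heq : (fun z : ℝ × ℝ =>
          z.1 * z.2 * (z.2 - z.1) * (exp (-r * z.2) - exp (-r * z.1)))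
          = fun z : ℝ × ℝ => z.1 * (z.2 ^ 2 * exp (-r * z.2))
            - z.1 ^ 2 * (z.2 * exp (-r * z.2))
            - (z.1 * exp (-r * z.1)) * z.2 ^ 2
            + (z.1 ^ 2 * exp (-r * z.1)) * z.2 := by
        funext z; ring
      have hI12 : Integrable (fun z : ℝ × ℝ => z.1 * (z.2 ^ 2 * exp (-r * z.2))
          - z.1 ^ 2 * (z.2 * exp (-r * z.2))) (μ.prod μ) := hI1.sub hI2
      have hI123 : Integrable (fun z : ℝ × ℝ => z.1 * (z.2 ^ 2 * exp (-r * z.2))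
          - z.1 ^ 2 * (z.2 * exp (-r * z.2))
          - (z.1 * exp (-r * z.1)) * z.2 ^ 2) (μ.prod μ) := hI12.sub hI3
      rw [heq, integral_add hI123 hI4,
        integral_sub hI12 hI3, integral_sub hI1 hI2,
        integral_prod_mul (f := fun x : ℝ => x) (g := fun y : ℝ => y ^ 2 * exp (-r * y)),
        integral_prod_mul (f := fun x : ℝ => x ^ 2) (g := fun y : ℝ => y * exp (-r * y)),
        integral_prod_mul (f := fun x : ℝ => x * exp (-r * x)) (g := fun y : ℝ => y ^ 2),
        integral_prod_mul (f := fun x : ℝ => x ^ 2 * exp (-r * x)) (g := fun y : ℝ => y)]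
    have hkey : a * d ≤ c * b := by
      rw [hexpand] at hF_nonpos
      linarith
    nlinarith [mul_nonneg hA (sub_nonneg.2 hdc)]
  · -- degenerate case: t not integrable, so a = 0 and b = 0
    have hb0 : ¬ Integrable (fun t : ℝ => t * exp (-r * t)) μ := by
      intro h
      apply hta
      have h1 : IntegrableOn (fun t : ℝ => t) (Set.Ioc 0 1) μ := by
        have hg : Integrable (fun t : ℝ => exp r * (t * exp (-r * t)))
            (μ.restrict (Set.Ioc 0 1)) := (h.integrableOn).const_mul _
        refine hg.mono' continuous_id.aestronglyMeasurable ?_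
        filter_upwards [ae_restrict_mem measurableSet_Ioc] with t ht
        obtain ⟨ht0, ht1⟩ := ht
        have h2 : exp (-r) ≤ exp (-r * t) := exp_le_exp.2 (by nlinarith)
        have h3 : exp (-r) = (exp r)⁻¹ := by rw [exp_neg]
        have h5 : (0:ℝ) < exp r := exp_pos r
        rw [Real.norm_eq_abs, abs_of_pos ht0]
        calc t = exp r * (t * (exp r)⁻¹) := by field_simp
          _ = exp r * (t * exp (-r)) := by rw [h3]
          _ ≤ exp r * (t * exp (-r * t)) :=
              mul_le_mul_of_nonneg_left (mul_le_mul_of_nonneg_left h2 ht0.le) h5.le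
      have h2 : IntegrableOn (fun t : ℝ => t) (Set.Ioi 1) μ := by
        refine (hν2.integrableOn).mono' continuous_id.aestronglyMeasurable ?_
        filter_upwards [ae_restrict_mem measurableSet_Ioi] with t ht
        have ht1 : (1:ℝ) < t := ht
        rw [Real.norm_eq_abs, abs_of_pos (by linarith)]
        nlinarith
      have h3 : IntegrableOn (fun t : ℝ => t) (Set.Ioc 0 1 ∪ Set.Ioi 1) μ := h1.union h2
      rw [Set.Ioc_union_Ioi_eq_Ioi zero_le_one] at h3
      have h4 : μ.restrict (Set.Ioi 0) = μ := by
        rw [hμdef, Measure.restrict_restrict measurableSet_Ioi, Set.inter_self]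
      rwa [IntegrableOn, h4] at h3
    have ha0 : a = 0 := integral_undef hta
    have hb0' : b = 0 := integral_undef hb0
    rw [ha0, hb0']
    nlinarith [mul_nonneg hA (sub_nonneg.2 hdc)]
end

section
/- Let N ≥ 1. Let G be the real symmetric (N+1)×(N+1) block matrix G = [[A, B],[Bᵀ, C]] with A an m×m block, and suppose C is invertible. Write G⁻¹ (when G is invertible) in the same block form [[A', B'],[B'ᵀ, C']]. Then the signature of G equals the signature of A plus the signature of C'. -/
open Matrix Finset
set_option linter.unusedSectionVars false
set_option maxHeartbeats 1000000

/-- The signature of a real symmetric matrix: number of positive eigenvalues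
minus number of negative eigenvalues. -/
noncomputable def matrixSignature {n : Type*} [Fintype n] [DecidableEq n]
    (M : Matrix n n ℝ) (hM : M.IsHermitian) : ℤ :=
  ((Finset.univ.filter fun i => 0 < hM.eigenvalues i).card : ℤ) -
    ((Finset.univ.filter fun i => hM.eigenvalues i < 0).card : ℤ)

namespace SigAux

variable {ι : Type*} [Fintype ι] [DecidableEq ι]

/-- The eigenvector basis of a real symmetric matrix, as a basis of `ι → ℝ`. -/
noncomputable def ebasis {M : Matrix ι ι ℝ} (hM : M.IsHermitian) : Module.Basis ι ℝ (ι → ℝ) :=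
  hM.eigenvectorBasis.toBasis.map (WithLp.linearEquiv 2 ℝ (ι → ℝ))

lemma ebasis_apply {M : Matrix ι ι ℝ} (hM : M.IsHermitian) (i : ι) :
    ebasis hM i = ⇑(hM.eigenvectorBasis i) := by
  simp [ebasis]

lemma ebasis_ortho {M : Matrix ι ι ℝ} (hM : M.IsHermitian) (i j : ι) :
    ebasis hM i ⬝ᵥ M *ᵥ ebasis hM j = if i = j then hM.eigenvalues i else 0 := by
  rw [ebasis_apply, ebasis_apply, hM.mulVec_eigenvectorBasis j]
  have horth : (inner ℝ (hM.eigenvectorBasis i) (hM.eigenvectorBasis j) : ℝ)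
      = if i = j then 1 else 0 :=
    orthonormal_iff_ite.mp hM.eigenvectorBasis.orthonormal i j
  have hdot : ⇑(hM.eigenvectorBasis i) ⬝ᵥ ⇑(hM.eigenvectorBasis j)
      = (inner ℝ (hM.eigenvectorBasis i) (hM.eigenvectorBasis j) : ℝ) := by
    rw [PiLp.inner_apply]
    simp [dotProduct, mul_comm]
  rw [dotProduct_smul, smul_eq_mul, hdot, horth]
  by_cases h : i = j
  · subst h; simp
  · simp [h]


lemma sum_dotProduct' {κ : Type*} (s : Finset κ) (f : κ → ι → ℝ) (v : ι → ℝ) :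
    (∑ i ∈ s, f i) ⬝ᵥ v = ∑ i ∈ s, f i ⬝ᵥ v := by
  simp only [dotProduct, Finset.sum_apply, Finset.sum_mul]
  exact Finset.sum_comm

lemma dotProduct_sum' {κ : Type*} (s : Finset κ) (v : ι → ℝ) (f : κ → ι → ℝ) :
    v ⬝ᵥ (∑ i ∈ s, f i) = ∑ i ∈ s, v ⬝ᵥ f i := by
  simp only [dotProduct, Finset.sum_apply, Finset.mul_sum]
  exact Finset.sum_comm

lemma mulVec_sum' {κ : Type*} (s : Finset κ) (M : Matrix ι ι ℝ) (f : κ → ι → ℝ) :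
    M *ᵥ (∑ i ∈ s, f i) = ∑ i ∈ s, M *ᵥ f i := by
  ext k
  simp only [mulVec, dotProduct, Finset.sum_apply, Finset.mul_sum]
  exact Finset.sum_comm

lemma qf_expand {κ : Type*} [Fintype κ] [DecidableEq κ]
    {M : Matrix ι ι ℝ} {b : Module.Basis κ ℝ (ι → ℝ)} {l : κ → ℝ}
    (hb : ∀ i j, b i ⬝ᵥ M *ᵥ b j = if i = j then l i else 0) (x : ι → ℝ) :
    x ⬝ᵥ M *ᵥ x = ∑ i, b.repr x i * b.repr x i * l i := by
  conv_lhs => rw [← b.sum_repr x]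
  rw [mulVec_sum', sum_dotProduct']
  refine Finset.sum_congr rfl fun i _ => ?_
  rw [dotProduct_sum']
  have : ∀ j ∈ Finset.univ, (b.repr x i • b i) ⬝ᵥ (M *ᵥ (b.repr x j • b j))
      = if i = j then b.repr x i * b.repr x i * l i else 0 := by
    intro j _
    rw [mulVec_smul, smul_dotProduct, dotProduct_smul, hb i j]
    by_cases h : i = j
    · subst h; simp [smul_eq_mul]; ring
    · simp [h]
  rw [Finset.sum_congr rfl this, Finset.sum_ite_eq, if_pos (Finset.mem_univ i)]

lemma finrank_span_filter {κ : Type*} [Fintype κ] [DecidableEq κ]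
    (b : Module.Basis κ ℝ (ι → ℝ)) (s : Finset κ) :
    Module.finrank ℝ (Submodule.span ℝ (⇑b '' ↑s)) = s.card := by
  have hli : LinearIndependent ℝ (fun i : {i // i ∈ s} => b i) :=
    b.linearIndependent.comp _ Subtype.val_injective
  have hr : Set.range (fun i : {i // i ∈ s} => b i) = ⇑b '' ↑s := by
    ext y; simp
  rw [← hr, finrank_span_eq_card hli, Fintype.card_coe]

lemma pos_on_span {κ : Type*} [Fintype κ] [DecidableEq κ]
    {M : Matrix ι ι ℝ} {b : Module.Basis κ ℝ (ι → ℝ)} {l : κ → ℝ}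
    (hb : ∀ i j, b i ⬝ᵥ M *ᵥ b j = if i = j then l i else 0) {s : Finset κ}
    (hs : ∀ i ∈ s, 0 < l i) {x : ι → ℝ}
    (hx : x ∈ Submodule.span ℝ (⇑b '' ↑s)) (hx0 : x ≠ 0) :
    0 < x ⬝ᵥ M *ᵥ x := by
  rw [qf_expand hb x]
  have hsupp : ↑(b.repr x).support ⊆ (↑s : Set κ) := b.mem_span_image.mp hx
  have hne : (b.repr x) ≠ 0 := fun h => hx0 (b.repr.map_eq_zero_iff.mp h)
  obtain ⟨i0, hi0⟩ := Finsupp.ne_iff.mp hne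
  simp only [Finsupp.coe_zero, Pi.zero_apply] at hi0
  refine Finset.sum_pos' (fun i _ => ?_) ⟨i0, Finset.mem_univ i0, ?_⟩
  · by_cases h : b.repr x i = 0
    · simp [h]
    · have : i ∈ s := hsupp (Finsupp.mem_support_iff.mpr h)
      exact le_of_lt (mul_pos (mul_self_pos.mpr h) (hs i this))
  · have : i0 ∈ s := hsupp (Finsupp.mem_support_iff.mpr hi0)
    exact mul_pos (mul_self_pos.mpr hi0) (hs i0 this)

lemma nonpos_on_span {κ : Type*} [Fintype κ] [DecidableEq κ]
    {M : Matrix ι ι ℝ} {b : Module.Basis κ ℝ (ι → ℝ)} {l : κ → ℝ}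
    (hb : ∀ i j, b i ⬝ᵥ M *ᵥ b j = if i = j then l i else 0) {s : Finset κ}
    (hs : ∀ i ∈ s, l i ≤ 0) {x : ι → ℝ}
    (hx : x ∈ Submodule.span ℝ (⇑b '' ↑s)) :
    x ⬝ᵥ M *ᵥ x ≤ 0 := by
  rw [qf_expand hb x]
  have hsupp : ↑(b.repr x).support ⊆ (↑s : Set κ) := b.mem_span_image.mp hx
  refine Finset.sum_nonpos fun i _ => ?_
  by_cases h : b.repr x i = 0
  · simp [h]
  · have : i ∈ s := hsupp (Finsupp.mem_support_iff.mpr h)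
    exact mul_nonpos_of_nonneg_of_nonpos (mul_self_nonneg _) (hs i this)

lemma posCount_le_posCount {κ₁ κ₂ : Type*} [Fintype κ₁] [DecidableEq κ₁]
    [Fintype κ₂] [DecidableEq κ₂] {M : Matrix ι ι ℝ}
    (b₁ : Module.Basis κ₁ ℝ (ι → ℝ)) (b₂ : Module.Basis κ₂ ℝ (ι → ℝ)) {l₁ : κ₁ → ℝ} {l₂ : κ₂ → ℝ}
    (h₁ : ∀ i j, b₁ i ⬝ᵥ M *ᵥ b₁ j = if i = j then l₁ i else 0)
    (h₂ : ∀ i j, b₂ i ⬝ᵥ M *ᵥ b₂ j = if i = j then l₂ i else 0) :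
    (univ.filter fun i => 0 < l₁ i).card ≤ (univ.filter fun i => 0 < l₂ i).card := by
  classical
  set s₁ : Finset κ₁ := univ.filter fun i => 0 < l₁ i with hs₁
  set t₂ : Finset κ₂ := univ.filter fun i => ¬ 0 < l₂ i with ht₂
  set W₁ := Submodule.span ℝ (⇑b₁ '' ↑s₁) with hW₁
  set W₂ := Submodule.span ℝ (⇑b₂ '' ↑t₂) with hW₂
  have hd : W₁ ⊓ W₂ = ⊥ := by
    rw [Submodule.eq_bot_iff]
    intro x hx
    by_contra hx0
    have hpos : 0 < x ⬝ᵥ M *ᵥ x :=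
      pos_on_span h₁ (fun i hi => (Finset.mem_filter.mp hi).2) hx.1 hx0
    have hnp : x ⬝ᵥ M *ᵥ x ≤ 0 :=
      nonpos_on_span h₂ (fun i hi => not_lt.mp (Finset.mem_filter.mp hi).2) hx.2
    exact absurd hnp (not_le.mpr hpos)
  have hrk := Submodule.finrank_sup_add_finrank_inf_eq W₁ W₂
  rw [hd, finrank_bot, add_zero] at hrk
  have hle : Module.finrank ℝ ↥(W₁ ⊔ W₂) ≤ Module.finrank ℝ (ι → ℝ) :=
    Submodule.finrank_le _
  have h1 : Module.finrank ℝ W₁ = s₁.card := finrank_span_filter b₁ s₁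
  have h2 : Module.finrank ℝ W₂ = t₂.card := finrank_span_filter b₂ t₂
  have htot : Module.finrank ℝ (ι → ℝ) = Fintype.card κ₂ :=
    Module.finrank_eq_card_basis b₂
  have hsplit : (univ.filter fun i => 0 < l₂ i).card + t₂.card = Fintype.card κ₂ := by
    rw [ht₂]
    rw [Finset.card_filter_add_card_filter_not]
    exact Finset.card_univ
  omega


theorem signature_eq_orthobasis {κ : Type*} [Fintype κ] [DecidableEq κ]
    {M : Matrix ι ι ℝ} (hM : M.IsHermitian)
    (b : Module.Basis κ ℝ (ι → ℝ)) (l : κ → ℝ)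
    (hb : ∀ i j, b i ⬝ᵥ M *ᵥ b j = if i = j then l i else 0) :
    matrixSignature M hM = ((univ.filter fun i => 0 < l i).card : ℤ) -
      ((univ.filter fun i => l i < 0).card : ℤ) := by
  have hpos : (univ.filter fun i => 0 < hM.eigenvalues i).card
      = (univ.filter fun i => 0 < l i).card :=
    le_antisymm (posCount_le_posCount (ebasis hM) b (ebasis_ortho hM) hb)
      (posCount_le_posCount b (ebasis hM) hb (ebasis_ortho hM))
  have hnegb : ∀ i j, b i ⬝ᵥ (-M) *ᵥ b j = if i = j then -l i else 0 := by
    intro i j; rw [neg_mulVec, dotProduct_neg, hb i j]; split <;> simp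
  have hnege : ∀ i j, ebasis hM i ⬝ᵥ (-M) *ᵥ ebasis hM j
      = if i = j then -(hM.eigenvalues i) else 0 := by
    intro i j; rw [neg_mulVec, dotProduct_neg, ebasis_ortho hM i j]; split <;> simp
  have hneg' : (univ.filter fun i => 0 < -(hM.eigenvalues i)).card
      = (univ.filter fun i => 0 < -l i).card :=
    le_antisymm (posCount_le_posCount (ebasis hM) b hnege hnegb)
      (posCount_le_posCount b (ebasis hM) hnegb hnege)
  have e1 : (univ.filter fun i => 0 < -(hM.eigenvalues i))
      = (univ.filter fun i => hM.eigenvalues i < 0) := by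
    apply Finset.filter_congr; intro i _; simp [neg_pos]
  have e2 : (univ.filter fun i => 0 < -l i) = (univ.filter fun i => l i < 0) := by
    apply Finset.filter_congr; intro i _; simp [neg_pos]
  rw [e1, e2] at hneg'
  unfold matrixSignature
  rw [hpos, hneg']

lemma sig_eq_of_eq {M N : Matrix ι ι ℝ} (h : M = N) (hM : M.IsHermitian)
    (hN : N.IsHermitian) : matrixSignature M hM = matrixSignature N hN := by
  subst h; rfl

lemma sig_congr {M P : Matrix ι ι ℝ} (hM : M.IsHermitian) (hP : IsUnit P)
    (h' : (Pᵀ * M * P).IsHermitian) :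
    matrixSignature (Pᵀ * M * P) h' = matrixSignature M hM := by
  haveI hInv : Invertible P := P.invertibleOfIsUnitDet ((isUnit_iff_isUnit_det P).mp hP)
  set e := P.toLinearEquiv' hInv with he
  have happ : ∀ x, e x = P *ᵥ x := fun x => by
    show Matrix.toLin' P x = _
    rw [Matrix.toLin'_apply]
  set b' : Module.Basis ι ℝ (ι → ℝ) := (ebasis hM).map e.symm with hb'
  have hPb : ∀ i, P *ᵥ b' i = ebasis hM i := by
    intro i
    rw [hb', Module.Basis.map_apply, ← happ]
    exact e.apply_symm_apply _
  have hortho : ∀ i j, b' i ⬝ᵥ (Pᵀ * M * P) *ᵥ b' j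
      = if i = j then hM.eigenvalues i else 0 := by
    intro i j
    rw [show (Pᵀ * M * P) *ᵥ b' j = Pᵀ *ᵥ (M *ᵥ (P *ᵥ b' j)) by
      rw [mulVec_mulVec, mulVec_mulVec, Matrix.mul_assoc]]
    rw [dotProduct_mulVec, vecMul_transpose, hPb i, hPb j, ebasis_ortho]
  rw [signature_eq_orthobasis h' b' hM.eigenvalues hortho]
  rfl

lemma sig_neg {M : Matrix ι ι ℝ} (hM : M.IsHermitian) (h' : (-M).IsHermitian) :
    matrixSignature (-M) h' = - matrixSignature M hM := by
  have hortho : ∀ i j, ebasis hM i ⬝ᵥ (-M) *ᵥ ebasis hM j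
      = if i = j then -(hM.eigenvalues i) else 0 := by
    intro i j; rw [neg_mulVec, dotProduct_neg, ebasis_ortho hM i j]; split <;> simp
  rw [signature_eq_orthobasis h' (ebasis hM) _ hortho]
  have e1 : (univ.filter fun i => 0 < -(hM.eigenvalues i))
      = (univ.filter fun i => hM.eigenvalues i < 0) := by
    apply Finset.filter_congr; intro i _; simp [neg_pos]
  have e2 : (univ.filter fun i => -(hM.eigenvalues i) < 0)
      = (univ.filter fun i => 0 < hM.eigenvalues i) := by
    apply Finset.filter_congr; intro i _; simp
  rw [e1, e2]
  unfold matrixSignature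
  ring

lemma sig_inv {M : Matrix ι ι ℝ} (hM : M.IsHermitian) (hU : IsUnit M)
    (h' : (M⁻¹).IsHermitian) : matrixSignature M⁻¹ h' = matrixSignature M hM := by
  have hd : IsUnit M.det := (isUnit_iff_isUnit_det M).mp hU
  have hMt : Mᵀ = M := hM
  have heq : M⁻¹ = (M⁻¹)ᵀ * M * M⁻¹ := by
    rw [transpose_nonsing_inv, hMt, Matrix.mul_assoc, mul_nonsing_inv M hd, Matrix.mul_one]
  have hU' : IsUnit (M⁻¹) := by
    rw [isUnit_iff_isUnit_det]
    exact M.isUnit_nonsing_inv_det hd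
  calc matrixSignature M⁻¹ h'
      = matrixSignature ((M⁻¹)ᵀ * M * M⁻¹) (heq ▸ h') := sig_eq_of_eq heq _ _
    _ = matrixSignature M hM := sig_congr hM hU' _

lemma sig_reindex {κ : Type*} [Fintype κ] [DecidableEq κ] (e : κ ≃ ι) {M : Matrix ι ι ℝ}
    (hM : M.IsHermitian) (h' : (M.submatrix ⇑e ⇑e).IsHermitian) :
    matrixSignature (M.submatrix ⇑e ⇑e) h' = matrixSignature M hM := by
  set b' : Module.Basis ι ℝ (κ → ℝ) := (ebasis hM).map (LinearEquiv.funCongrLeft ℝ ℝ e) with hb'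
  have hb'i : ∀ i, b' i = (ebasis hM i) ∘ ⇑e := by
    intro i
    rw [hb', Module.Basis.map_apply, LinearEquiv.funCongrLeft_apply]
    rfl
  have hortho : ∀ i j, b' i ⬝ᵥ (M.submatrix ⇑e ⇑e) *ᵥ b' j
      = if i = j then hM.eigenvalues i else 0 := by
    intro i j
    rw [hb'i i, hb'i j, submatrix_mulVec_equiv]
    have h2 : ((ebasis hM j) ∘ ⇑e) ∘ ⇑e.symm = ebasis hM j := by
      ext k; simp
    rw [h2, ← ebasis_ortho hM i j]
    exact Equiv.sum_comp e fun k => ebasis hM i k * (M *ᵥ ebasis hM j) k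
  rw [signature_eq_orthobasis h' b' hM.eigenvalues hortho]
  rfl

lemma sig_blockDiag {κ : Type*} [Fintype κ] [DecidableEq κ]
    {X : Matrix ι ι ℝ} {Y : Matrix κ κ ℝ} (hX : X.IsHermitian) (hY : Y.IsHermitian)
    (h' : (fromBlocks X 0 0 Y).IsHermitian) :
    matrixSignature (fromBlocks X 0 0 Y) h'
      = matrixSignature X hX + matrixSignature Y hY := by
  set b : Module.Basis (ι ⊕ κ) ℝ (ι ⊕ κ → ℝ) :=
    ((ebasis hX).prod (ebasis hY)).map
      (LinearEquiv.sumArrowLequivProdArrow ι κ ℝ ℝ).symm with hb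
  have hbl : ∀ i, b (Sum.inl i) = Sum.elim (ebasis hX i) (0 : κ → ℝ) := by
    intro i; ext x
    cases x <;>
      simp [hb, Module.Basis.prod_apply, LinearEquiv.sumArrowLequivProdArrow]
  have hbr : ∀ j, b (Sum.inr j) = Sum.elim (0 : ι → ℝ) (ebasis hY j) := by
    intro j; ext x
    cases x <;>
      simp [hb, Module.Basis.prod_apply, LinearEquiv.sumArrowLequivProdArrow]
  set l : ι ⊕ κ → ℝ := Sum.elim hX.eigenvalues hY.eigenvalues with hl
  have hortho : ∀ p q, b p ⬝ᵥ (fromBlocks X 0 0 Y) *ᵥ b q = if p = q then l p else 0 := by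
    intro p q
    cases p <;> cases q <;>
      simp [hbl, hbr, fromBlocks_mulVec, sumElim_dotProduct_sumElim,
        ebasis_ortho, hl]
  rw [signature_eq_orthobasis h' b l hortho]
  have c1 : (univ.filter fun p => 0 < l p).card
      = (univ.filter fun i => 0 < hX.eigenvalues i).card
        + (univ.filter fun j => 0 < hY.eigenvalues j).card := by
    rw [Finset.card_filter, Finset.card_filter, Finset.card_filter, Fintype.sum_sum_type]
    simp [hl]
  have c2 : (univ.filter fun p => l p < 0).card
      = (univ.filter fun i => hX.eigenvalues i < 0).card
        + (univ.filter fun j => hY.eigenvalues j < 0).card := by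
    rw [Finset.card_filter, Finset.card_filter, Finset.card_filter, Fintype.sum_sum_type]
    simp [hl]
  rw [c1, c2]
  unfold matrixSignature
  push_cast
  ring

lemma herm_of_t {M : Matrix ι ι ℝ} (h : Mᵀ = M) : M.IsHermitian := by
  rw [Matrix.IsHermitian, conjTranspose_eq_transpose_of_trivial, h]

lemma herm_t {M : Matrix ι ι ℝ} (h : M.IsHermitian) : Mᵀ = M := by
  rw [← conjTranspose_eq_transpose_of_trivial]; exact h

section Blocks

variable {κ : Type*} [Fintype κ] [DecidableEq κ]

lemma schur_congr_eq (X : Matrix ι ι ℝ) (Z : Matrix κ κ ℝ) (Y : Matrix ι κ ℝ) :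
    fromBlocks (X + Y * Z * Yᵀ) (Y * Z) (Z * Yᵀ) Z
      = (fromBlocks 1 0 Yᵀ 1)ᵀ * (fromBlocks X 0 0 Z) * (fromBlocks 1 0 Yᵀ 1) := by
  rw [fromBlocks_transpose, fromBlocks_multiply, fromBlocks_multiply]
  simp [Matrix.mul_assoc]

lemma herm_fromBlocks {X : Matrix ι ι ℝ} {Z : Matrix κ κ ℝ} (hX : X.IsHermitian)
    (hZ : Z.IsHermitian) (Y : Matrix ι κ ℝ) :
    (fromBlocks X Y Yᵀ Z).IsHermitian := by
  rw [Matrix.IsHermitian, conjTranspose_eq_transpose_of_trivial, fromBlocks_transpose,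
    herm_t hX, herm_t hZ, transpose_transpose]

lemma sig_schur {X : Matrix ι ι ℝ} {Z : Matrix κ κ ℝ} (Y : Matrix ι κ ℝ)
    (hX : X.IsHermitian) (hZ : Z.IsHermitian)
    (h' : (fromBlocks (X + Y * Z * Yᵀ) (Y * Z) (Z * Yᵀ) Z).IsHermitian) :
    matrixSignature (fromBlocks (X + Y * Z * Yᵀ) (Y * Z) (Z * Yᵀ) Z) h'
      = matrixSignature X hX + matrixSignature Z hZ := by
  have hP : IsUnit (fromBlocks (1 : Matrix ι ι ℝ) 0 Yᵀ (1 : Matrix κ κ ℝ)) := by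
    rw [isUnit_iff_isUnit_det, det_fromBlocks_zero₁₂]
    simp
  have hD : (fromBlocks X 0 0 Z).IsHermitian := by
    rw [Matrix.IsHermitian, conjTranspose_eq_transpose_of_trivial, fromBlocks_transpose,
      herm_t hX, herm_t hZ]
    simp
  have heq := schur_congr_eq X Z Y
  calc matrixSignature (fromBlocks (X + Y * Z * Yᵀ) (Y * Z) (Z * Yᵀ) Z) h'
      = matrixSignature _ (heq ▸ h') := sig_eq_of_eq heq _ _
    _ = matrixSignature (fromBlocks X 0 0 Z) hD := sig_congr hD hP _
    _ = matrixSignature X hX + matrixSignature Z hZ := sig_blockDiag hX hZ hD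

end Blocks

end SigAux

open SigAux in
theorem stmt_14 (N m n : ℕ) (hN : 1 ≤ N) (hmn : m + n = N + 1)
    (A : Matrix (Fin m) (Fin m) ℝ) (B : Matrix (Fin m) (Fin n) ℝ)
    (C : Matrix (Fin n) (Fin n) ℝ)
    (G : Matrix (Fin m ⊕ Fin n) (Fin m ⊕ Fin n) ℝ)
    (hG : G = Matrix.fromBlocks A B Bᵀ C)
    (hGsym : G.IsHermitian) (hA : A.IsHermitian)
    (hCinv : IsUnit C) (hGinv : IsUnit G)
    (C' : Matrix (Fin n) (Fin n) ℝ) (hC' : C' = (G⁻¹).toBlocks₂₂)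
    (hC'sym : C'.IsHermitian) :
    matrixSignature G hGsym = matrixSignature A hA + matrixSignature C' hC'sym := by
  classical
  have hCd : IsUnit C.det := (isUnit_iff_isUnit_det C).mp hCinv
  have hGd : IsUnit G.det := (isUnit_iff_isUnit_det G).mp hGinv
  have hCsym : C.IsHermitian := by
    have h0 : (fromBlocks A B Bᵀ C)ᴴ = fromBlocks A B Bᵀ C := hG ▸ hGsym
    have h2 := congrArg Matrix.toBlocks₂₂ h0
    rwa [fromBlocks_conjTranspose, toBlocks_fromBlocks₂₂, toBlocks_fromBlocks₂₂] at h2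
  have hCt : Cᵀ = C := herm_t hCsym
  have hCit : (C⁻¹)ᵀ = C⁻¹ := by rw [transpose_nonsing_inv, hCt]
  have hCCi : C * C⁻¹ = 1 := mul_nonsing_inv C hCd
  have hCiC : C⁻¹ * C = 1 := nonsing_inv_mul C hCd
  have hAt : Aᵀ = A := herm_t hA
  set S : Matrix (Fin m) (Fin m) ℝ := A - B * C⁻¹ * Bᵀ with hS
  have hSt : Sᵀ = S := by
    rw [hS, transpose_sub, hAt, transpose_mul, transpose_transpose, transpose_mul, hCit,
      ← Matrix.mul_assoc]
  have hSsym : S.IsHermitian := herm_of_t hSt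
  haveI : Invertible C := C.invertibleOfIsUnitDet hCd
  have hdetG : G.det = C.det * S.det := by
    rw [hG, det_fromBlocks₂₂, invOf_eq_nonsing_inv, hS]
  have hSd : IsUnit S.det := by
    rw [hdetG] at hGd
    exact isUnit_of_mul_isUnit_right hGd
  have hSu : IsUnit S := (isUnit_iff_isUnit_det S).mpr hSd
  have hSSi : S * S⁻¹ = 1 := mul_nonsing_inv S hSd
  have hSiS : S⁻¹ * S = 1 := nonsing_inv_mul S hSd
  have hSit : (S⁻¹)ᵀ = S⁻¹ := by rw [transpose_nonsing_inv, hSt]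
  -- explicit inverse of G
  have hGGinv : G * (fromBlocks S⁻¹ (-(S⁻¹ * B * C⁻¹)) (-(C⁻¹ * Bᵀ * S⁻¹))
      (C⁻¹ + C⁻¹ * Bᵀ * S⁻¹ * B * C⁻¹)) = 1 := by
    rw [hG, fromBlocks_multiply, ← fromBlocks_one]
    have e11 : A * S⁻¹ + B * -(C⁻¹ * Bᵀ * S⁻¹) = 1 := by
      rw [Matrix.mul_neg, ← Matrix.mul_assoc, ← Matrix.mul_assoc, ← sub_eq_add_neg,
        ← Matrix.sub_mul, ← hS, hSSi]
    have e12 : A * -(S⁻¹ * B * C⁻¹) + B * (C⁻¹ + C⁻¹ * Bᵀ * S⁻¹ * B * C⁻¹) = 0 := by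
      have h3 : S * S⁻¹ * B * C⁻¹ = B * C⁻¹ := by rw [hSSi, Matrix.one_mul]
      have h4 : A * S⁻¹ * B * C⁻¹ - B * C⁻¹ * Bᵀ * S⁻¹ * B * C⁻¹ = B * C⁻¹ := by
        rw [← Matrix.sub_mul, ← Matrix.sub_mul, ← Matrix.sub_mul, ← hS]
        exact h3
      have h1 : A * (S⁻¹ * B * C⁻¹) = A * S⁻¹ * B * C⁻¹ := by
        rw [← Matrix.mul_assoc, ← Matrix.mul_assoc]
      have h2 : B * (C⁻¹ + C⁻¹ * Bᵀ * S⁻¹ * B * C⁻¹)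
          = B * C⁻¹ + B * C⁻¹ * Bᵀ * S⁻¹ * B * C⁻¹ := by
        rw [Matrix.mul_add]
        congr 1
        rw [← Matrix.mul_assoc, ← Matrix.mul_assoc, ← Matrix.mul_assoc, ← Matrix.mul_assoc]
      rw [Matrix.mul_neg, h1, h2, sub_eq_iff_eq_add.mp h4]
      abel
    have e21 : Bᵀ * S⁻¹ + C * -(C⁻¹ * Bᵀ * S⁻¹) = 0 := by
      have : C * (C⁻¹ * Bᵀ * S⁻¹) = Bᵀ * S⁻¹ := by
        rw [← Matrix.mul_assoc, ← Matrix.mul_assoc, hCCi, Matrix.one_mul]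
      rw [Matrix.mul_neg, this]
      abel
    have e22 : Bᵀ * -(S⁻¹ * B * C⁻¹) + C * (C⁻¹ + C⁻¹ * Bᵀ * S⁻¹ * B * C⁻¹) = 1 := by
      have h1 : Bᵀ * (S⁻¹ * B * C⁻¹) = Bᵀ * S⁻¹ * B * C⁻¹ := by
        rw [← Matrix.mul_assoc, ← Matrix.mul_assoc]
      have h2 : C * (C⁻¹ + C⁻¹ * Bᵀ * S⁻¹ * B * C⁻¹) = 1 + Bᵀ * S⁻¹ * B * C⁻¹ := by
        rw [Matrix.mul_add, hCCi]
        congr 1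
        rw [← Matrix.mul_assoc, ← Matrix.mul_assoc, ← Matrix.mul_assoc, ← Matrix.mul_assoc,
          hCCi, Matrix.one_mul]
      rw [Matrix.mul_neg, h1, h2]
      abel
    rw [e11, e12, e21, e22]
  have hGinveq : G⁻¹ = fromBlocks S⁻¹ (-(S⁻¹ * B * C⁻¹)) (-(C⁻¹ * Bᵀ * S⁻¹))
      (C⁻¹ + C⁻¹ * Bᵀ * S⁻¹ * B * C⁻¹) := inv_eq_right_inv hGGinv
  have hC'eq : C' = C⁻¹ + C⁻¹ * Bᵀ * S⁻¹ * B * C⁻¹ := by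
    rw [hC', hGinveq, toBlocks_fromBlocks₂₂]
  -- Step 1: sig G = sig S + sig C
  set E : Matrix (Fin m) (Fin n) ℝ := B * C⁻¹ with hE
  have hEt : Eᵀ = C⁻¹ * Bᵀ := by rw [hE, transpose_mul, hCit]
  have hb12 : E * C = B := by rw [hE, Matrix.mul_assoc, hCiC, Matrix.mul_one]
  have hb21 : C * Eᵀ = Bᵀ := by rw [hEt, ← Matrix.mul_assoc, hCCi, Matrix.one_mul]
  have hb11 : S + E * C * Eᵀ = A := by
    rw [hb12, hEt, ← Matrix.mul_assoc, hS]
    abel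
  have h1eq : G = fromBlocks (S + E * C * Eᵀ) (E * C) (C * Eᵀ) C := by
    rw [hG, hb11, hb12, hb21]
  have hsig1 : matrixSignature G hGsym
      = matrixSignature S hSsym + matrixSignature C hCsym :=
    (sig_eq_of_eq h1eq hGsym (h1eq ▸ hGsym)).trans (sig_schur E hSsym hCsym _)
  -- The auxiliary matrix T
  have hnegCi : (-(C⁻¹)).IsHermitian := herm_of_t (by rw [transpose_neg, hCit])
  set T : Matrix (Fin m ⊕ Fin n) (Fin m ⊕ Fin n) ℝ := fromBlocks S E Eᵀ (-(C⁻¹)) with hT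
  have hTsym : T.IsHermitian := herm_fromBlocks hSsym hnegCi E
  -- Step 2a: sig T = sig A + sig (-(C⁻¹))
  have ha12 : (-B) * -(C⁻¹) = E := by
    rw [Matrix.neg_mul, Matrix.mul_neg, neg_neg]
  have ha21 : -(C⁻¹) * (-B)ᵀ = Eᵀ := by
    rw [transpose_neg, Matrix.neg_mul, Matrix.mul_neg, neg_neg, hEt]
  have ha11 : A + (-B) * -(C⁻¹) * (-B)ᵀ = S := by
    rw [ha12, transpose_neg, Matrix.mul_neg, ← sub_eq_add_neg]
  have h2aeq : T = fromBlocks (A + (-B) * -(C⁻¹) * (-B)ᵀ) ((-B) * -(C⁻¹))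
      (-(C⁻¹) * (-B)ᵀ) (-(C⁻¹)) := by
    rw [ha11, ha12, ha21, hT]
  have hsig2a : matrixSignature T hTsym
      = matrixSignature A hA + matrixSignature (-(C⁻¹)) hnegCi :=
    (sig_eq_of_eq h2aeq hTsym (h2aeq ▸ hTsym)).trans (sig_schur (-B) hA hnegCi _)
  -- Step 2b: sig T = sig (-C') + sig S
  set e : (Fin n ⊕ Fin m) ≃ (Fin m ⊕ Fin n) := Equiv.sumComm (Fin n) (Fin m) with he
  have hswap : T.submatrix ⇑e ⇑e = fromBlocks (-(C⁻¹)) Eᵀ E S := by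
    rw [hT, he]
    have : ⇑(Equiv.sumComm (Fin n) (Fin m)) = Sum.swap := rfl
    rw [this, fromBlocks_submatrix_sum_swap_sum_swap]
  have hswapsym : (T.submatrix ⇑e ⇑e).IsHermitian := by
    rw [hswap]
    have h := herm_fromBlocks hnegCi hSsym Eᵀ
    rwa [transpose_transpose] at h
  have hsigswap : matrixSignature (T.submatrix ⇑e ⇑e) hswapsym = matrixSignature T hTsym :=
    sig_reindex e hTsym hswapsym
  set Y2 : Matrix (Fin n) (Fin m) ℝ := Eᵀ * S⁻¹ with hY2
  have hY2t : Y2ᵀ = S⁻¹ * E := by rw [hY2, transpose_mul, hSit, transpose_transpose]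
  have hc12 : Y2 * S = Eᵀ := by rw [hY2, Matrix.mul_assoc, hSiS, Matrix.mul_one]
  have hc21 : S * Y2ᵀ = E := by rw [hY2t, ← Matrix.mul_assoc, hSSi, Matrix.one_mul]
  have hnegC' : (-C').IsHermitian := herm_of_t (by rw [transpose_neg, herm_t hC'sym])
  have hc11 : -C' + Y2 * S * Y2ᵀ = -(C⁻¹) := by
    rw [hc12, hY2t, hC'eq, hEt, ← Matrix.mul_assoc, ← Matrix.mul_assoc]
    abel
  have h2beq : T.submatrix ⇑e ⇑e
      = fromBlocks (-C' + Y2 * S * Y2ᵀ) (Y2 * S) (S * Y2ᵀ) S := by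
    rw [hc11, hc12, hc21, hswap]
  have hsig2b : matrixSignature T hTsym
      = matrixSignature (-C') hnegC' + matrixSignature S hSsym := by
    rw [← hsigswap]
    exact (sig_eq_of_eq h2beq hswapsym (h2beq ▸ hswapsym)).trans
      (sig_schur Y2 hnegC' hSsym _)
  -- remaining signature identities
  have hCisym : (C⁻¹).IsHermitian := herm_of_t hCit
  have hsneg1 : matrixSignature (-(C⁻¹)) hnegCi = - matrixSignature (C⁻¹) hCisym :=
    sig_neg hCisym hnegCi
  have hsinv : matrixSignature (C⁻¹) hCisym = matrixSignature C hCsym :=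
    sig_inv hCsym hCinv hCisym
  have hsneg2 : matrixSignature (-C') hnegC' = - matrixSignature C' hC'sym :=
    sig_neg hC'sym hnegC'
  -- combine
  rw [hsig1]
  rw [hsig2a, hsneg1, hsinv, hsneg2] at hsig2b
  linarith
end

section
/- Let D: (0,∞) → ℝ have the form D(r) = ∫(1-e^{-rt})ν(dt) + Ar with A ≥ 0, ν a measure with ∫t²ν(dt) < ∞, and suppose D'(0) > 0 > D''(0). Define α(r) = 2D''(r)/σ_Y(r), β(r) = (D'(r)-D'(0))/σ_Y(r) where σ_Y(r) = √(D(r) - D'(r)²r/D'(0)) > 0. If for all r > 0 the inequality -2D''(0) > (α(r)r + β(r))β(r) holds, then for all r > 0: D(r) - D'(r)²r/D'(0) + D''(r)²r²/D''(0) + (D'(r)-D'(0))²/(2D''(0)) > 0. -/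
open MeasureTheory Real

lemma aux_exp_bd (x : ℝ) (hx : 0 ≤ x) : Real.exp (-x) * (1 + x) ≤ 1 := by
  have h1 : Real.exp x * Real.exp (-x) = 1 := by
    rw [← Real.exp_add]; simp
  nlinarith [Real.add_one_le_exp x, Real.exp_pos (-x)]

theorem stmt_17 (ν : Measure ℝ) (A : ℝ) (hA : 0 ≤ A)
    (hν2 : Integrable (fun t => t ^ 2) (ν.restrict (Set.Ioi 0)))
    (D D' D'' : ℝ → ℝ)
    (hD : ∀ r : ℝ, D r = (∫ t in Set.Ioi (0 : ℝ), (1 - exp (-r * t)) ∂ν) + A * r)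
    (hD' : ∀ r : ℝ, D' r = A + ∫ t in Set.Ioi (0 : ℝ), t * exp (-r * t) ∂ν)
    (hD'' : ∀ r : ℝ, D'' r = -∫ t in Set.Ioi (0 : ℝ), t ^ 2 * exp (-r * t) ∂ν)
    (hpos : D' 0 > 0) (hneg : D'' 0 < 0)
    (σY α β : ℝ → ℝ)
    (hσ : ∀ r : ℝ, σY r = Real.sqrt (D r - D' r ^ 2 * r / D' 0))
    (hσpos : ∀ r > (0 : ℝ), 0 < σY r)
    (hα : ∀ r : ℝ, α r = 2 * D'' r / σY r)
    (hβ : ∀ r : ℝ, β r = (D' r - D' 0) / σY r)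
    (har : ∀ r > (0 : ℝ), -2 * D'' 0 > (α r * r + β r) * β r) :
    ∀ r > (0 : ℝ),
      D r - D' r ^ 2 * r / D' 0 + D'' r ^ 2 * r ^ 2 / D'' 0
        + (D' r - D' 0) ^ 2 / (2 * D'' 0) > 0 := by
  intro r hr
  by_cases hT : Integrable (fun t : ℝ => t) (ν.restrict (Set.Ioi 0))
  · -- integrable case
    have hI1 : ∀ s : ℝ, 0 ≤ s →
        Integrable (fun t : ℝ => t * Real.exp (-s * t)) (ν.restrict (Set.Ioi 0)) := by
      intro s hs
      have hcont : Continuous fun t : ℝ => t * Real.exp (-s * t) :=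
        continuous_id.mul (Real.continuous_exp.comp ((continuous_const.mul continuous_id)))
      refine hT.mono' hcont.aestronglyMeasurable ?_
      refine Filter.eventually_of_mem (self_mem_ae_restrict measurableSet_Ioi) fun t ht => ?_
      have ht0 : (0:ℝ) < t := ht
      have he : Real.exp (-s * t) ≤ 1 := by
        apply Real.exp_le_one_iff.mpr; nlinarith
      rw [Real.norm_eq_abs, abs_of_nonneg (by positivity)]
      nlinarith [Real.exp_pos (-s * t)]
    have hI2 : Integrable (fun t : ℝ => t ^ 2 * Real.exp (-r * t)) (ν.restrict (Set.Ioi 0)) := by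
      have hcont : Continuous fun t : ℝ => t ^ 2 * Real.exp (-r * t) :=
        (continuous_pow 2).mul (Real.continuous_exp.comp ((continuous_const.mul continuous_id)))
      refine hν2.mono' hcont.aestronglyMeasurable ?_
      refine Filter.eventually_of_mem (self_mem_ae_restrict measurableSet_Ioi) fun t ht => ?_
      have ht0 : (0:ℝ) < t := ht
      have he : Real.exp (-r * t) ≤ 1 := by
        apply Real.exp_le_one_iff.mpr; nlinarith
      rw [Real.norm_eq_abs, abs_of_nonneg (by positivity)]
      nlinarith [Real.exp_pos (-r * t), sq_nonneg t]
    have hD'0 : D' 0 = A + ∫ t in Set.Ioi (0:ℝ), t ∂ν := by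
      have := hD' 0
      simpa using this
    -- key inequalities
    have hPr : 0 ≤ ∫ t in Set.Ioi (0:ℝ), t ^ 2 * Real.exp (-r * t) ∂ν :=
      setIntegral_nonneg measurableSet_Ioi fun t _ => by positivity
    have H2 : D'' r ≤ 0 := by rw [hD'' r]; linarith
    have key : 0 ≤ ∫ t in Set.Ioi (0:ℝ),
        (t - t * Real.exp (-r * t) - r * (t ^ 2 * Real.exp (-r * t))) ∂ν := by
      refine setIntegral_nonneg measurableSet_Ioi fun t ht => ?_
      have ht0 : (0:ℝ) < t := ht
      have hb := aux_exp_bd (r * t) (by positivity)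
      have hrw : -(r * t) = -r * t := by ring
      rw [hrw] at hb
      nlinarith [Real.exp_pos (-r * t)]
    have h12 : Integrable (fun t : ℝ => t - t * Real.exp (-r * t)) (ν.restrict (Set.Ioi 0)) :=
      hT.sub (hI1 r hr.le)
    have hq : Integrable (fun t : ℝ => r * (t ^ 2 * Real.exp (-r * t))) (ν.restrict (Set.Ioi 0)) :=
      hI2.const_mul r
    rw [integral_sub h12 hq, integral_sub hT (hI1 r hr.le), integral_const_mul] at key
    have H3 : D'' r * r - (D' r - D' 0) ≥ 0 := by
      rw [hD'' r, hD' r, hD'0]; linarith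
    -- from har
    set S := D r - D' r ^ 2 * r / D' 0 with hS
    have hσp : 0 < σY r := hσpos r hr
    have hSpos : 0 < S := by
      have := hσp; rw [hσ r] at this; exact Real.sqrt_pos.mp this
    have hσ2 : σY r ^ 2 = S := by rw [hσ r]; exact Real.sq_sqrt hSpos.le
    have H1 : (2 * D'' r * r + (D' r - D' 0)) * (D' r - D' 0) < -2 * D'' 0 * S := by
      have h := har r hr
      rw [hα r, hβ r] at h
      have hne : σY r ≠ 0 := ne_of_gt hσp
      have h2 := mul_lt_mul_of_pos_right h (show (0:ℝ) < σY r ^ 2 by positivity)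
      have heq : (2 * D'' r / σY r * r + (D' r - D' 0) / σY r) * ((D' r - D' 0) / σY r) * σY r ^ 2
          = (2 * D'' r * r + (D' r - D' 0)) * (D' r - D' 0) := by
        have hs : σY r * (σY r)⁻¹ = 1 := mul_inv_cancel₀ hne
        simp only [div_eq_mul_inv]
        linear_combination ((2 * D'' r * r + (D' r - D' 0)) * (D' r - D' 0) *
          (σY r * (σY r)⁻¹ + 1)) * hs
      rw [heq, hσ2] at h2
      linarith
    have h4 : D'' r * r ≤ 0 := mul_nonpos_iff.mpr (Or.inr ⟨H2, hr.le⟩)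
    have hlt : 2 * D'' 0 * S + 2 * (D'' r * r) ^ 2 + (D' r - D' 0) ^ 2 < 0 := by
      nlinarith [H1, mul_nonneg (neg_nonneg.mpr h4) H3]
    have hne0 : D'' 0 ≠ 0 := ne_of_lt hneg
    have expand : 2 * D'' 0 * (S + D'' r ^ 2 * r ^ 2 / D'' 0 + (D' r - D' 0) ^ 2 / (2 * D'' 0))
        = 2 * D'' 0 * S + 2 * (D'' r * r) ^ 2 + (D' r - D' 0) ^ 2 := by
      field_simp
    by_contra hcon
    push_neg at hcon
    have h6 : 0 ≤ (-(2 * D'' 0)) *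
        (-(S + D'' r ^ 2 * r ^ 2 / D'' 0 + (D' r - D' 0) ^ 2 / (2 * D'' 0))) :=
      mul_nonneg (by linarith) (by linarith)
    have h7 : (-(2 * D'' 0)) *
        (-(S + D'' r ^ 2 * r ^ 2 / D'' 0 + (D' r - D' 0) ^ 2 / (2 * D'' 0)))
        = 2 * D'' 0 * (S + D'' r ^ 2 * r ^ 2 / D'' 0 + (D' r - D' 0) ^ 2 / (2 * D'' 0)) := by
      ring
    rw [h7, expand] at h6
    linarith [h6, hlt]
  · -- non-integrable (degenerate) case: contradiction with hσpos
    exfalso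
    have hr1 : Real.exp (-r) < 1 := Real.exp_lt_one_iff.mpr (by linarith)
    have hnA : ¬ Integrable (fun t : ℝ => t * Real.exp (-r * t)) (ν.restrict (Set.Ioi 0)) := by
      intro h
      apply hT
      refine ((h.const_mul (Real.exp r)).add hν2).mono' aestronglyMeasurable_id ?_
      refine Filter.eventually_of_mem (self_mem_ae_restrict measurableSet_Ioi) fun t ht => ?_
      have ht0 : (0:ℝ) < t := ht
      simp only [Pi.add_apply]
      rw [Real.norm_eq_abs, abs_of_nonneg ht0.le]
      rcases le_or_gt t 1 with h1 | h1
      · have hee : Real.exp r * Real.exp (-r * t) = Real.exp (r + -r * t) :=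
          (Real.exp_add r (-r * t)).symm
        have hge : (1:ℝ) ≤ Real.exp (r + -r * t) := by
          have := Real.add_one_le_exp (r + -r * t)
          nlinarith
        nlinarith [sq_nonneg t, Real.exp_pos (-r * t)]
      · have : Real.exp r * (t * Real.exp (-r * t)) ≥ 0 := by positivity
        nlinarith
    have hn0 : ¬ Integrable (fun t : ℝ => t * Real.exp (-0 * t)) (ν.restrict (Set.Ioi 0)) := by
      simpa using hT
    have hnB : ¬ Integrable (fun t : ℝ => 1 - Real.exp (-r * t)) (ν.restrict (Set.Ioi 0)) := by
      intro h
      apply hT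
      set c := (1 - Real.exp (-r))⁻¹ with hc
      have hcpos : 0 < c := inv_pos.mpr (by linarith)
      refine ((h.const_mul c).add hν2).mono' aestronglyMeasurable_id ?_
      refine Filter.eventually_of_mem (self_mem_ae_restrict measurableSet_Ioi) fun t ht => ?_
      have ht0 : (0:ℝ) < t := ht
      simp only [Pi.add_apply]
      rw [Real.norm_eq_abs, abs_of_nonneg ht0.le]
      rcases le_or_gt t 1 with h1 | h1
      · have conv := convexOn_exp.2 (Set.mem_univ (0:ℝ)) (Set.mem_univ (-r))
          (by linarith : (0:ℝ) ≤ 1 - t) ht0.le (by ring)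
        simp only [smul_eq_mul, mul_zero, zero_add, Real.exp_zero, mul_one] at conv
        have hargs : t * -r = -r * t := by ring
        rw [hargs] at conv
        -- conv : exp (-r*t) ≤ (1 - t) + t * exp (-r)
        have conv' : t * (1 - Real.exp (-r)) ≤ 1 - Real.exp (-r * t) := by nlinarith
        have h3 := mul_le_mul_of_nonneg_left conv' hcpos.le
        have hcc : c * (1 - Real.exp (-r)) = 1 := inv_mul_cancel₀ (by linarith)
        have h5 : c * (1 - Real.exp (-r)) * t = t := by rw [hcc]; ring
        nlinarith [sq_nonneg t, h3, h5]
      · have he : Real.exp (-r * t) ≤ 1 := Real.exp_le_one_iff.mpr (by nlinarith)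
        nlinarith [mul_nonneg hcpos.le (by linarith : (0:ℝ) ≤ 1 - Real.exp (-r * t))]
    have hDr : D r = A * r := by rw [hD r, integral_undef hnB]; ring
    have hD'r : D' r = A := by rw [hD' r, integral_undef hnA]; ring
    have hD'0 : D' 0 = A := by rw [hD' 0, integral_undef hn0]; ring
    have hApos : 0 < A := by rw [hD'0] at hpos; exact hpos
    have hzero : σY r = 0 := by
      rw [hσ r, hDr, hD'r, hD'0]
      have : A * r - A ^ 2 * r / A = 0 := by field_simp; ring
      rw [this, Real.sqrt_zero]
    have := hσpos r hr
    rw [hzero] at this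
    exact lt_irrefl 0 this
end

section
/- Let N ≥ 2 and r > 0, and let D_N be four times differentiable at 0 with D_N''(0) < 0. Define α, β real numbers (depending on r) and set d₁ = 1/2 + β²/(4D_N''(0)), d₂ = αβr/(4D_N''(0)), d₃ = α²r²/(4D_N''(0)). If d₁ > -1/(N-1) and 1 + d₃ + (d₁ + 2d₂ - (N-1)d₂²)/(1 + (N-1)d₁) > 0, then 1 + N/2 + (N+1)α²r²/(8D_N''(0)) + αβr/(2D_N''(0)) + Nβ²/(4D_N''(0)) > 0, and conversely. -/
set_option maxHeartbeats 1600000 in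
theorem stmt_18 (N : ℕ) (hN : 2 ≤ N) (r K α β : ℝ) (hr : 0 < r) (hK : K < 0)
    (d₁ d₂ d₃ : ℝ)
    (hd₁ : d₁ = 1 / 2 + β ^ 2 / (4 * K))
    (hd₂ : d₂ = α * β * r / (4 * K))
    (hd₃ : d₃ = α ^ 2 * r ^ 2 / (4 * K)) :
    (d₁ > -(1 / (N - 1 : ℝ)) ∧
      1 + d₃ + (d₁ + 2 * d₂ - (N - 1 : ℝ) * d₂ ^ 2) / (1 + (N - 1 : ℝ) * d₁) > 0) ↔
    1 + (N : ℝ) / 2 + (N + 1 : ℝ) * α ^ 2 * r ^ 2 / (8 * K)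
      + α * β * r / (2 * K) + (N : ℝ) * β ^ 2 / (4 * K) > 0 := by
  have hn : (2:ℝ) ≤ (N:ℝ) := by exact_mod_cast hN
  have hK0 : K ≠ 0 := ne_of_lt hK
  have hn1 : (0:ℝ) < (N:ℝ) - 1 := by linarith
  set E : ℝ := 1 + (N : ℝ) / 2 + (N + 1 : ℝ) * α ^ 2 * r ^ 2 / (8 * K)
      + α * β * r / (2 * K) + (N : ℝ) * β ^ 2 / (4 * K) with hE
  set P : ℝ := 1 + ((N:ℝ) - 1) * d₁ with hPdef
  clear_value E P
  have key : P * (1 + d₃) + (d₁ + 2 * d₂ - ((N:ℝ) - 1) * d₂ ^ 2) = E := by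
    rw [hPdef, hE, hd₁, hd₂, hd₃]
    field_simp
    ring
  have hone : ((N:ℝ) - 1) * (1 / ((N:ℝ) - 1)) = 1 :=
    mul_one_div_cancel (ne_of_gt hn1)
  have hPiff : d₁ > -(1 / ((N:ℝ) - 1)) ↔ 0 < P := by
    rw [hPdef]
    constructor
    · intro h
      nlinarith [mul_lt_mul_of_pos_left h hn1]
    · intro h
      have h2 : -(1 / ((N:ℝ)-1)) * ((N:ℝ)-1) < d₁ * ((N:ℝ)-1) := by nlinarith
      exact lt_of_mul_lt_mul_right h2 (le_of_lt hn1)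
  constructor
  · rintro ⟨h1, h2⟩
    have hP : 0 < P := hPiff.mp h1
    have hQ : 1 + d₃ + (d₁ + 2 * d₂ - ((N:ℝ) - 1) * d₂ ^ 2) / P > 0 := h2
    have : E = P * (1 + d₃ + (d₁ + 2 * d₂ - ((N:ℝ) - 1) * d₂ ^ 2) / P) := by
      rw [← key]
      field_simp
    rw [gt_iff_lt, this]
    exact mul_pos hP hQ
  · intro hEpos
    have hKn : 0 < -K := by linarith
    have hF : (-(8*K)) * E = -8*K - 4*K*(N:ℝ) - ((N:ℝ)+1)*α^2*r^2 - 4*α*β*r - 2*(N:ℝ)*β^2 := by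
      rw [hE]; field_simp; ring
    have hFpos : 0 < -8*K - 4*K*(N:ℝ) - ((N:ℝ)+1)*α^2*r^2 - 4*α*β*r - 2*(N:ℝ)*β^2 := by
      rw [← hF]
      exact mul_pos (by linarith) hEpos
    have hP : 0 < P := by
      rw [hPdef, hd₁]
      have hβ : ((N:ℝ)-1) * β^2 < -2*K*((N:ℝ)+1) := by
        nlinarith [sq_nonneg (((N:ℝ)+1)*α*r + 2*β), sq_nonneg β, sq_nonneg (α*r),
          mul_pos hn1 hKn, mul_nonneg (sq_nonneg β) (le_of_lt hn1)]
      have h4K : (0:ℝ) < -(4*K) := by linarith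
      have hid : (1 + ((N:ℝ)-1)*(1/2 + β^2/(4*K))) * (-(4*K))
          = -2*K*((N:ℝ)+1) - ((N:ℝ)-1)*β^2 := by
        field_simp
        ring
      have hPK : 0 < (1 + ((N:ℝ)-1)*(1/2 + β^2/(4*K))) * (-(4*K)) := by
        rw [hid]; linarith
      nlinarith [hPK, h4K]
    refine ⟨hPiff.mpr hP, ?_⟩
    have : 1 + d₃ + (d₁ + 2 * d₂ - ((N:ℝ) - 1) * d₂ ^ 2) / P = E / P := by
      rw [← key]
      field_simp
    rw [gt_iff_lt, this]
    exact div_pos hEpos hP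
end

section
/- Let N ≥ 2 and let α, β, K be real numbers with K < 0 and r > 0. Suppose 1 + N/2 + (N+1)α²r²/(8K) + αβr/(2K) + Nβ²/(4K) > 0. Then 1/(N-1) + 1/2 + β²/(4K) > 0. -/
theorem stmt_19 (N : ℕ) (hN : 2 ≤ N) (α β r K : ℝ) (hK : K < 0) (hr : 0 < r)
    (h : 1 + (N : ℝ) / 2 + (N + 1 : ℝ) * α ^ 2 * r ^ 2 / (8 * K)
      + α * β * r / (2 * K) + (N : ℝ) * β ^ 2 / (4 * K) > 0) :
    1 / (N - 1 : ℝ) + 1 / 2 + β ^ 2 / (4 * K) > 0 := by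
  have hK0 : K ≠ 0 := ne_of_lt hK
  have hn : (2:ℝ) ≤ (N:ℝ) := by exact_mod_cast hN
  -- clear denominators in h
  have e : 1 + (N : ℝ) / 2 + (N + 1 : ℝ) * α ^ 2 * r ^ 2 / (8 * K)
      + α * β * r / (2 * K) + (N : ℝ) * β ^ 2 / (4 * K)
      = (K * (1 + (N:ℝ)/2) + (N + 1 : ℝ) * α ^ 2 * r ^ 2 / 8
        + α * β * r / 2 + (N : ℝ) * β ^ 2 / 4) / K := by
    field_simp
  rw [e] at h
  have h1 : K * (1 + (N:ℝ)/2) + (N + 1 : ℝ) * α ^ 2 * r ^ 2 / 8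
        + α * β * r / 2 + (N : ℝ) * β ^ 2 / 4 < 0 := by
    by_contra hc
    push_neg at hc
    have := div_nonpos_of_nonneg_of_nonpos hc (le_of_lt hK)
    linarith
  have hN1 : (0:ℝ) < (N:ℝ) - 1 := by linarith
  have e2 : 1 / ((N:ℝ) - 1) + 1 / 2 + β ^ 2 / (4 * K)
      = (K * (1 / ((N:ℝ) - 1) + 1/2) + β ^ 2 / 4) / K := by
    field_simp
  rw [e2]
  have hNp : (0:ℝ) < (N:ℝ) + 1 := by linarith
  have h1m : (K * (1 + (N:ℝ)/2) + (N + 1 : ℝ) * α ^ 2 * r ^ 2 / 8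
        + α * β * r / 2 + (N : ℝ) * β ^ 2 / 4) * ((N:ℝ) + 1) < 0 :=
    mul_neg_of_neg_of_pos h1 hNp
  have h2 : K * (1 / ((N:ℝ) - 1) + 1/2) + β ^ 2 / 4 < 0 := by
    have e3 : K * (1 / ((N:ℝ) - 1) + 1/2) + β ^ 2 / 4
        = (K * ((N:ℝ)+1) + β ^ 2 * ((N:ℝ)-1) / 2) / (2*((N:ℝ)-1)) := by
      field_simp
      ring
    rw [e3]
    apply div_neg_of_neg_of_pos
    · nlinarith [sq_nonneg (((N:ℝ)+1)*α*r + 2*β), h1m]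
    · linarith
  exact div_pos_of_neg_of_neg h2 hK
end
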